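/- Let p be a prime, let ℤ[1/p] denote the additive group of all rational numbers of the form z/p^m with z ∈ ℤ and m ∈ ℕ, and let ℤ_{p^∞} denote the Prüfer p-group ℤ[1/p]/ℤ. The direct sum of countably infinitely many copies of ℤ_{p^∞} has no automatic presentation: there do not exist a finite alphabet Σ, a regular language A ⊆ Σ*, and a binary operation on A whose graph is a regular ternary relation, such that the resulting structure is a group isomorphic to ⨁_{n∈ℕ} ℤ_{p^∞}. -/

import Mathlib

/-- The convolution of an `n`-tuple of words. -/
def conv {α : Type*} {n : ℕ} (w : Fin n → List α) : List (Fin n → Option α) :=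
  (List.range (Finset.univ.sup fun i => (w i).length)).map fun k i => (w i)[k]?

/-- The additive group `ℤ[1/p]` of rationals of the form `z/p^m`, `z ∈ ℤ`, `m ∈ ℕ`. -/
def ZOneOverP (p : ℕ) (hp : p.Prime) : AddSubgroup ℚ where
  carrier := {q : ℚ | ∃ (z : ℤ) (m : ℕ), q = z / p ^ m}
  zero_mem' := ⟨0, 0, by simp⟩
  add_mem' := by
    rintro a b ⟨z₁, m₁, rfl⟩ ⟨z₂, m₂, rfl⟩
    have hp0 : (p : ℚ) ≠ 0 := by exact_mod_cast hp.ne_zero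
    refine ⟨z₁ * p ^ m₂ + z₂ * p ^ m₁, m₁ + m₂, ?_⟩
    push_cast
    rw [pow_add]
    field_simp
  neg_mem' := by
    rintro a ⟨z, m, rfl⟩
    exact ⟨-z, m, by push_cast; ring⟩

/-- The Prüfer group `ℤ_{p^∞} = ℤ[1/p]/ℤ`, the quotient of `ℤ[1/p]` by its
subgroup of integers. -/
def Prufer (p : ℕ) (hp : p.Prime) : Type :=
  ZOneOverP p hp ⧸ ((AddSubgroup.zmultiples (1 : ℚ)).addSubgroupOf (ZOneOverP p hp))

noncomputable instance (p : ℕ) (hp : p.Prime) : AddCommGroup (Prufer p hp) :=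
  QuotientAddGroup.Quotient.addCommGroup _


lemma conv_getElem? {α : Type*} {n : ℕ} (w : Fin n → List α) (k : ℕ) :
    (conv w)[k]? = if k < (Finset.univ.sup fun i => (w i).length)
      then some (fun i => (w i)[k]?) else none := by
  unfold conv
  rw [List.getElem?_map]
  split_ifs with h
  · rw [List.getElem?_range h]; rfl
  · rw [List.getElem?_eq_none (by simpa using h)]; rfl

lemma comp_getElem? {α : Type*} {n : ℕ} (w : Fin n → List α) (i : Fin n) (k : ℕ) :
    (w i)[k]? = ((conv w)[k]?).bind fun f => f i := by
  rw [conv_getElem?]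
  split_ifs with h
  · rfl
  · push_neg at h
    exact List.getElem?_eq_none
      (le_trans (Finset.le_sup (f := fun i => (w i).length) (Finset.mem_univ i)) h)

lemma conv_inj {α : Type*} {n : ℕ} {v w : Fin n → List α} (h : conv v = conv w) : v = w := by
  funext i
  apply List.ext_getElem?
  intro k
  rw [comp_getElem? v i k, comp_getElem? w i k, h]

lemma length_conv {α : Type*} {n : ℕ} (w : Fin n → List α) :
    (conv w).length = Finset.univ.sup fun i => (w i).length := by
  simp [conv]

lemma cut_getElem? {α : Type*} (l : List α) (t1 t2 k : ℕ) (h : t1 ≤ t2) :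
    (l.take t1 ++ l.drop t2)[k]? = if k < t1 then l[k]? else l[k + (t2 - t1)]? := by
  rw [List.getElem?_append]
  simp only [List.length_take]
  rcases lt_or_ge k (min t1 l.length) with hk | hk
  · rw [if_pos hk, List.getElem?_take, if_pos (by omega), if_pos (by omega)]
  · rw [if_neg (not_lt.mpr hk), List.getElem?_drop]
    rcases le_or_gt t1 l.length with hl | hl
    · rw [min_eq_left hl] at hk ⊢
      rw [if_neg (by omega)]
      congr 1
      omega
    · rw [min_eq_right hl.le] at hk ⊢
      rw [List.getElem?_eq_none (by omega)]
      split_ifs with h2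
      · exact (List.getElem?_eq_none (by omega)).symm
      · exact (List.getElem?_eq_none (by omega)).symm

lemma length_cut {α : Type*} (l : List α) (t1 t2 : ℕ) :
    (l.take t1 ++ l.drop t2).length = min t1 l.length + (l.length - t2) := by
  simp [List.length_take, List.length_drop]

lemma conv_cut {α : Type*} {n : ℕ} (hn : n ≠ 0) (w : Fin n → List α) (t1 t2 : ℕ)
    (h12 : t1 ≤ t2) (hS : t2 ≤ Finset.univ.sup fun i => (w i).length)
    (hdi : ∀ i, (w i).length ≤ t1 ∨ t2 ≤ (w i).length) :
    (conv w).take t1 ++ (conv w).drop t2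
      = conv fun i => (w i).take t1 ++ (w i).drop t2 := by
  set S := Finset.univ.sup fun i => (w i).length with hSdef
  have hne : (Finset.univ : Finset (Fin n)).Nonempty := by
    simpa [Finset.univ_nonempty_iff] using Fin.pos_iff_nonempty.mp (Nat.pos_of_ne_zero hn)
  have hS' : (Finset.univ.sup fun i => ((w i).take t1 ++ (w i).drop t2).length)
      = t1 + (S - t2) := by
    apply le_antisymm
    · apply Finset.sup_le
      intro i _
      rw [length_cut]
      have : (w i).length ≤ S := Finset.le_sup (f := fun i => (w i).length) (Finset.mem_univ i)
      omega
    · obtain ⟨i, _, hi⟩ := Finset.exists_mem_eq_sup Finset.univ hne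
        (fun i => (w i).length)
      have h2 : t2 ≤ (w i).length := by
        rcases hdi i with h | h
        · omega
        · exact h
      calc t1 + (S - t2) = ((w i).take t1 ++ (w i).drop t2).length := by
            rw [length_cut]; omega
        _ ≤ _ := Finset.le_sup (f := fun i => ((w i).take t1 ++ (w i).drop t2).length) (Finset.mem_univ i)
  apply List.ext_getElem?
  intro k
  rw [cut_getElem? _ _ _ _ h12, conv_getElem?, conv_getElem?, conv_getElem?, hS']
  rcases lt_or_ge k t1 with hk | hk
  · rw [if_pos hk, if_pos (by omega), if_pos (by omega)]
    congr 1
    funext i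
    rw [cut_getElem? _ _ _ _ h12, if_pos hk]
  · rw [if_neg (not_lt.mpr hk)]
    rcases lt_or_ge (k + (t2 - t1)) S with hk2 | hk2
    · rw [if_pos hk2, if_pos (by omega)]
      congr 1
      funext i
      rw [cut_getElem? _ _ _ _ h12, if_neg (not_lt.mpr hk)]
    · rw [if_neg (by omega), if_neg (by omega)]

lemma cut_accepts {α σ : Type*} (M : DFA α σ) {w : List α} (hw : w ∈ M.accepts)
    {t1 t2 : ℕ} (h12 : t1 ≤ t2) (hst : M.eval (w.take t1) = M.eval (w.take t2)) :
    (w.take t1 ++ w.drop t2) ∈ M.accepts := by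
  rw [DFA.mem_accepts] at hw ⊢
  have : M.eval (w.take t1 ++ w.drop t2) = M.eval w := by
    conv_rhs => rw [← List.take_append_drop t2 w]
    unfold DFA.eval
    rw [DFA.evalFrom_of_append, DFA.evalFrom_of_append]
    exact congrFun (congrArg M.evalFrom hst) _
  rwa [this]

lemma pigeon {β : Type*} [Fintype β] (f : ℕ → β) (a b : ℕ)
    (h : a + Fintype.card β < b) :
    ∃ t1 t2, a ≤ t1 ∧ t1 < t2 ∧ t2 < b ∧ f t1 = f t2 := by
  have hcard : (Finset.univ : Finset β).card < (Finset.Ico a b).card := by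
    rw [Nat.card_Ico, Finset.card_univ]; omega
  obtain ⟨x, hx, y, hy, hxy, hfxy⟩ :=
    Finset.exists_ne_map_eq_of_card_lt_of_maps_to hcard (fun t _ => Finset.mem_univ (f t))
  simp only [Finset.mem_Ico] at hx hy
  rcases lt_or_gt_of_ne hxy with h1 | h1
  · exact ⟨x, y, hx.1, h1, hy.2, hfxy⟩
  · exact ⟨y, x, hy.1, h1, hx.2, hfxy.symm⟩
section Auto

variable {Γ : Type} [Fintype Γ] {σ : Type} [Fintype σ]
variable {A : Set (List Γ)} {add : A → A → A} {M : DFA (Fin 3 → Option Γ) σ}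

lemma addlen
    (hM : M.accepts = {w | ∃ x y : A, w = conv ![(x : List Γ), (y : List Γ), (add x y : List Γ)]})
    (x y : A) :
    (add x y : List Γ).length ≤ max (x : List Γ).length (y : List Γ).length + Fintype.card σ := by
  by_contra hcon
  push_neg at hcon
  set z : A := add x y with hz
  set m := max (x : List Γ).length (y : List Γ).length with hm
  set w := conv ![(x : List Γ), (y : List Γ), (z : List Γ)] with hwdef
  have hw : w ∈ M.accepts := by rw [hM]; exact ⟨x, y, rfl⟩
  obtain ⟨t1, t2, ht1, ht12, ht2, hst⟩ :=
    pigeon (fun t => M.eval (w.take t)) m (z : List Γ).length (by omega)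
  have hsup : t2 ≤ Finset.univ.sup
      fun i => ((![(x : List Γ), (y : List Γ), (z : List Γ)]) i).length := by
    refine le_trans ht2.le ?_
    exact Finset.le_sup (f := fun i => ((![(x : List Γ), (y : List Γ), (z : List Γ)]) i).length)
      (Finset.mem_univ (2 : Fin 3))
  have hdi : ∀ i : Fin 3, ((![(x : List Γ), (y : List Γ), (z : List Γ)]) i).length ≤ t1 ∨
      t2 ≤ ((![(x : List Γ), (y : List Γ), (z : List Γ)]) i).length := by
    intro i
    fin_cases i
    · left; show (x : List Γ).length ≤ t1; omega
    · left; show (y : List Γ).length ≤ t1; omega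
    · right; show t2 ≤ (z : List Γ).length; omega
  have hcut := cut_accepts M hw ht12.le hst
  rw [hwdef, conv_cut (by norm_num) _ t1 t2 ht12.le hsup hdi, hM] at hcut
  obtain ⟨x', y', heq⟩ := hcut
  have h3 := conv_inj heq
  have e0 := congrFun h3 0
  have e1 := congrFun h3 1
  have e2 := congrFun h3 2
  simp only [Matrix.cons_val_zero, Matrix.cons_val_one, Matrix.head_cons,
    Matrix.cons_val_two, Matrix.tail_cons] at e0 e1 e2
  have hx' : x' = x := by
    apply Subtype.ext
    rw [← e0, List.take_of_length_le (by omega), List.drop_eq_nil_of_le (by omega),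
      List.append_nil]
  have hy' : y' = y := by
    apply Subtype.ext
    rw [← e1, List.take_of_length_le (by omega), List.drop_eq_nil_of_le (by omega),
      List.append_nil]
  rw [hx', hy', ← hz] at e2
  have := congrArg List.length e2
  rw [length_cut] at this
  omega



lemma cutchain
    (hM : M.accepts = {w | ∃ x y : A, w = conv ![(x : List Γ), (y : List Γ), (add x y : List Γ)]})
    (q : ℕ) (hq : 1 ≤ q) (a : ℕ → A)
    (hrel : ∀ j, j < q → add (a 0) (a j) = a (j + 1))
    (hlong : ((a q : List Γ)).length + ((2 * Fintype.card σ) ^ q + 1) ≤ ((a 0 : List Γ)).length) :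
    ∃ b : ℕ → A, (∀ j, j < q → add (b 0) (b j) = b (j + 1)) ∧ b q = a q ∧
      ((b 0 : List Γ)).length < ((a 0 : List Γ)).length := by
  classical
  set W : ℕ → List (Fin 3 → Option Γ) :=
    fun j => conv ![((a 0 : List Γ)), (a j : List Γ), (a (j+1) : List Γ)] with hW
  have hacc : ∀ j, j < q → W j ∈ M.accepts := by
    intro j hj; rw [hM]; exact ⟨a 0, a j, by rw [hrel j hj]⟩
  set sig : ℕ → (Fin q → σ) × (Fin q → Bool) :=
    fun t => (fun j => M.eval ((W (j : ℕ)).take t),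
              fun j => decide (t < (a (j : ℕ) : List Γ).length)) with hsig
  have hcard : Fintype.card ((Fin q → σ) × (Fin q → Bool)) = (2 * Fintype.card σ) ^ q := by
    rw [Fintype.card_prod, Fintype.card_fun, Fintype.card_fun, Fintype.card_fin,
      Fintype.card_bool, mul_pow]
    ring
  obtain ⟨t1, t2, ht1, ht12, ht2, hsigeq⟩ :=
    pigeon sig ((a q : List Γ)).length ((a 0 : List Γ)).length (by rw [hcard]; omega)
  have hstates : ∀ j : Fin q, M.eval ((W (j : ℕ)).take t1) = M.eval ((W (j : ℕ)).take t2) :=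
    fun j => congrFun (congrArg Prod.fst hsigeq) j
  have hpat : ∀ j : Fin q, (t1 < (a (j : ℕ) : List Γ).length ↔ t2 < (a (j : ℕ) : List Γ).length) := by
    intro j
    have h := congrFun (congrArg Prod.snd hsigeq) j
    simpa [hsig] using h
  have hdi : ∀ j, j ≤ q → ((a j : List Γ).length ≤ t1 ∨ t2 ≤ (a j : List Γ).length) := by
    intro j hj
    rcases eq_or_lt_of_le hj with rfl | hlt
    · left; exact ht1
    · have h : t1 < (a j : List Γ).length ↔ t2 < (a j : List Γ).length := hpat ⟨j, hlt⟩
      by_cases hc : t1 < (a j : List Γ).length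
      · right
        have := h.mp hc
        omega
      · left; omega
  have key : ∀ j, j < q →
      ((W j).take t1 ++ (W j).drop t2
        = conv ![(a 0 : List Γ).take t1 ++ (a 0 : List Γ).drop t2,
                 (a j : List Γ).take t1 ++ (a j : List Γ).drop t2,
                 (a (j+1) : List Γ).take t1 ++ (a (j+1) : List Γ).drop t2]) ∧
      ((W j).take t1 ++ (W j).drop t2) ∈ M.accepts := by
    intro j hj
    have hsup : t2 ≤ Finset.univ.sup
        fun i => ((![(a 0 : List Γ), (a j : List Γ), (a (j+1) : List Γ)]) i).length := by
      refine le_trans ht2.le ?_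
      exact Finset.le_sup
        (f := fun i => ((![(a 0 : List Γ), (a j : List Γ), (a (j+1) : List Γ)]) i).length)
        (Finset.mem_univ (0 : Fin 3))
    have hdi3 : ∀ i : Fin 3,
        ((![(a 0 : List Γ), (a j : List Γ), (a (j+1) : List Γ)]) i).length ≤ t1 ∨
        t2 ≤ ((![(a 0 : List Γ), (a j : List Γ), (a (j+1) : List Γ)]) i).length := by
      intro i
      fin_cases i
      · show (a 0 : List Γ).length ≤ t1 ∨ t2 ≤ (a 0 : List Γ).length
        right; omega
      · show (a j : List Γ).length ≤ t1 ∨ t2 ≤ (a j : List Γ).length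
        exact hdi j hj.le
      · show (a (j+1) : List Γ).length ≤ t1 ∨ t2 ≤ (a (j+1) : List Γ).length
        exact hdi (j+1) hj
    constructor
    · rw [hW]
      rw [conv_cut (by norm_num) _ t1 t2 ht12.le hsup hdi3]
      congr 1
      funext i
      fin_cases i <;> rfl
    · exact cut_accepts M (hacc j hj) ht12.le (hstates ⟨j, hj⟩)
  have hmem : ∀ j, j ≤ q → ((a j : List Γ).take t1 ++ (a j : List Γ).drop t2) ∈ A := by
    intro j hj
    rcases eq_or_lt_of_le hj with rfl | hlt
    · rw [List.take_of_length_le (by omega), List.drop_eq_nil_of_le (by omega),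
        List.append_nil]
      exact (a j).2
    · obtain ⟨hconv, hacc'⟩ := key j hlt
      rw [hM] at hacc'
      obtain ⟨x', y', heq⟩ := hacc'
      have h3 := conv_inj (hconv.symm.trans heq)
      have e1 := congrFun h3 1
      simp only [Matrix.cons_val_one, Matrix.head_cons, Matrix.cons_val_zero] at e1
      rw [e1]
      exact y'.2
  set b : ℕ → A := fun j => if h : j ≤ q then
      ⟨(a j : List Γ).take t1 ++ (a j : List Γ).drop t2, hmem j h⟩ else a 0 with hb
  have hbv : ∀ j, j ≤ q → (b j : List Γ) = (a j : List Γ).take t1 ++ (a j : List Γ).drop t2 := by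
    intro j hj
    simp only [hb, dif_pos hj]
  refine ⟨b, ?_, ?_, ?_⟩
  · intro j hj
    obtain ⟨hconv, hacc'⟩ := key j hj
    rw [hM] at hacc'
    obtain ⟨x', y', heq⟩ := hacc'
    have h3 := conv_inj (hconv.symm.trans heq)
    have e0 := congrFun h3 0
    have e1 := congrFun h3 1
    have e2 := congrFun h3 2
    simp only [Matrix.cons_val_zero, Matrix.cons_val_one, Matrix.head_cons,
      Matrix.cons_val_two, Matrix.tail_cons] at e0 e1 e2
    have hb0 : b 0 = x' := by
      apply Subtype.ext
      rw [hbv 0 (by omega), e0]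
    have hbj : b j = y' := by
      apply Subtype.ext
      rw [hbv j hj.le, e1]
    rw [hb0, hbj]
    apply Subtype.ext
    rw [hbv (j+1) hj, e2]
  · apply Subtype.ext
    rw [hbv q le_rfl, List.take_of_length_le (by omega), List.drop_eq_nil_of_le (by omega),
      List.append_nil]
  · have := hbv 0 (by omega)
    rw [this]
    have h1 := congrArg List.length this
    rw [length_cut]
    omega
end Auto

section Group

variable (p : ℕ) (hp : p.Prime)

/-- the canonical quotient map -/
noncomputable def pmk : ZOneOverP p hp →+ Prufer p hp :=
  QuotientAddGroup.mk' _

lemma pmk_eq_zero_iff (x : ZOneOverP p hp) :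
    pmk p hp x = 0 ↔ ∃ k : ℤ, (x : ℚ) = k := by
  show (QuotientAddGroup.mk x : Prufer p hp) = 0 ↔ _
  rw [QuotientAddGroup.eq_zero_iff,
    AddSubgroup.mem_addSubgroupOf, AddSubgroup.mem_zmultiples_iff]
  constructor
  · rintro ⟨k, hk⟩; exact ⟨k, by simpa using hk.symm⟩
  · rintro ⟨k, hk⟩; exact ⟨k, by simpa using hk.symm⟩

lemma pmk_surjective : Function.Surjective (pmk p hp) :=
  fun x => QuotientAddGroup.induction_on x fun y => ⟨y, rfl⟩

/-- the element 1/p in ZOneOverP -/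
def oop : ZOneOverP p hp :=
  ⟨(p : ℚ)⁻¹, 1, 1, by push_cast; ring⟩

/-- the generator of order p in the Prüfer group -/
noncomputable def pu : Prufer p hp := pmk p hp (oop p hp)

include hp in
lemma hp0 : (p : ℚ) ≠ 0 := by
  have := hp.ne_zero
  exact_mod_cast this

lemma pu_p_smul : p • pu p hp = 0 := by
  rw [pu, ← map_nsmul, pmk_eq_zero_iff]
  refine ⟨1, ?_⟩
  show p • ((p:ℚ)⁻¹) = ((1:ℤ):ℚ)
  rw [nsmul_eq_mul, mul_inv_cancel₀ (hp0 p hp)]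
  norm_num

lemma pu_zsmul_dvd (a : ℤ) (h : a • pu p hp = 0) : (p : ℤ) ∣ a := by
  rw [pu, ← map_zsmul, pmk_eq_zero_iff] at h
  obtain ⟨k, hk⟩ := h
  have hk' : (a : ℚ) * (p : ℚ)⁻¹ = k := by
    rw [← hk]
    show _ = a • ((p:ℚ)⁻¹)
    rw [zsmul_eq_mul]
  rw [mul_inv_eq_iff_eq_mul₀ (hp0 p hp)] at hk'
  have h3 : a = k * p := by exact_mod_cast hk'
  exact ⟨k, by rw [h3, mul_comm]⟩

lemma prufer_div (g : Prufer p hp) : ∃ h : Prufer p hp, p • h = g := by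
  obtain ⟨⟨x, z, m, rfl⟩, rfl⟩ := pmk_surjective p hp g
  have hmem : ((z : ℚ) / p ^ (m + 1)) ∈ ZOneOverP p hp := ⟨z, m + 1, rfl⟩
  refine ⟨pmk p hp ⟨_, hmem⟩, ?_⟩
  rw [← map_nsmul]
  congr 1
  apply Subtype.ext
  show p • ((z : ℚ) / p ^ (m+1)) = (z : ℚ) / p ^ m
  rw [nsmul_eq_mul, pow_succ]
  rw [mul_comm ((p:ℚ)^m) (p:ℚ), ← mul_div_assoc, mul_div_mul_left _ _ (hp0 p hp)]

end Group

section DS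

variable (p : ℕ) (hp : p.Prime)

noncomputable abbrev Gds := DirectSum ℕ (fun _ => Prufer p hp)

noncomputable def eDS (i : ℕ) : Gds p hp := DirectSum.of (fun _ => Prufer p hp) i (pu p hp)

lemma ds_div (g : Gds p hp) : ∃ h : Gds p hp, p • h = g := by
  induction g using DirectSum.induction_on with
  | zero => exact ⟨0, smul_zero p⟩
  | of i x =>
    obtain ⟨h, hh⟩ := prufer_div p hp x
    exact ⟨DirectSum.of _ i h, by rw [← map_nsmul, hh]⟩
  | add x y hx hy =>
    obtain ⟨hx', h1⟩ := hx
    obtain ⟨hy', h2⟩ := hy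
    exact ⟨hx' + hy', by rw [smul_add, h1, h2]⟩

lemma indep (d k : ℕ) (h : Fin d → Gds p hp)
    (hroot : ∀ i, p ^ k • h i = eDS p hp i)
    (a : Fin d → ℤ) (hsum : ∑ i, a i • h i = 0) :
    ∀ i, (p : ℤ) ^ k ∣ a i := by
  induction k generalizing h a with
  | zero => intro i; simpa using one_dvd _
  | succ k ih =>
    have hbase : ∀ i : Fin d, a i • pu p hp = 0 := by
      intro i
      have h0 : ∑ j, a j • eDS p hp j = 0 := by
        calc ∑ j, a j • eDS p hp j = ∑ j, a j • (p ^ (k+1) • h j) := by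
              simp only [hroot]
          _ = p ^ (k+1) • ∑ j, a j • h j := by
              rw [Finset.smul_sum]
              refine Finset.sum_congr rfl fun j _ => ?_
              rw [smul_comm]
          _ = 0 := by rw [hsum, smul_zero]
      have h1 := congrArg (fun v : Gds p hp => v (i : ℕ)) h0
      simp only at h1
      rw [DFinsupp.finset_sum_apply] at h1
      have h2 : ∀ j : Fin d, (a j • eDS p hp (j:ℕ)) (i:ℕ)
          = if j = i then a j • pu p hp else 0 := by
        intro j
        have hsm : (a j • eDS p hp (j:ℕ)) (i:ℕ) = a j • (eDS p hp (j:ℕ)) (i:ℕ) := by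
          exact DFinsupp.smul_apply _ _ _
        rw [hsm]
        by_cases hij : j = i
        · subst hij
          rw [if_pos rfl, eDS, DirectSum.of_eq_same]
        · rw [if_neg hij, eDS,
            DirectSum.of_eq_of_ne _ _ _ (fun hc => hij (Fin.ext hc.symm)), smul_zero]
      rw [Finset.sum_congr rfl fun j _ => h2 j,
        Finset.sum_ite_eq' Finset.univ i (fun j => a j • pu p hp)] at h1
      have hz : ((0 : Gds p hp) (i:ℕ)) = 0 := rfl
      rw [hz, if_pos (Finset.mem_univ i)] at h1
      exact h1
    have hdvd1 : ∀ i, (p:ℤ) ∣ a i := fun i => pu_zsmul_dvd p hp _ (hbase i)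
    choose c hc using hdvd1
    have hsum2 : ∑ i, c i • ((p:ℕ) • h i) = 0 := by
      calc ∑ i, c i • ((p:ℕ) • h i) = ∑ i, a i • h i := by
            refine Finset.sum_congr rfl fun i _ => ?_
            calc c i • ((p:ℕ) • h i) = c i • (((p:ℤ)) • h i) := by
                  rw [natCast_zsmul]
              _ = (c i * p) • h i := by rw [mul_smul]
              _ = ((p:ℤ) * c i) • h i := by rw [mul_comm]
              _ = a i • h i := by rw [← hc i]
        _ = 0 := hsum
    have hroot2 : ∀ i, p ^ k • ((p:ℕ) • h i) = eDS p hp i := by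
      intro i
      rw [← mul_smul, ← pow_succ, hroot]
    have := ih (fun i => (p:ℕ) • h i) hroot2 c hsum2
    intro i
    rw [hc i, pow_succ']
    exact mul_dvd_mul dvd_rfl (this i)
end DS


section Main

variable {p : ℕ} {hp : p.Prime} {Γ : Type} [Fintype Γ] {σ : Type} [Fintype σ]
variable {A : Set (List Γ)} {add : A → A → A} {M : DFA (Fin 3 → Option Γ) σ}

/-- length of the word representing a group element -/
noncomputable def ell (e : Gds p hp ≃ A) (g : Gds p hp) : ℕ := ((e g : List Γ)).length

lemma ell_add (e : Gds p hp ≃ A)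
    (hM : M.accepts = {w | ∃ x y : A, w = conv ![(x : List Γ), (y : List Γ), (add x y : List Γ)]})
    (hadd : ∀ x y : Gds p hp, e (x + y) = add (e x) (e y))
    (x y : Gds p hp) :
    ell e (x + y) ≤ max (ell e x) (ell e y) + Fintype.card σ := by
  have h := addlen hM (e x) (e y)
  unfold ell
  rw [hadd x y]
  exact h

lemma esymm_add (e : Gds p hp ≃ A)
    (hadd : ∀ x y : Gds p hp, e (x + y) = add (e x) (e y))
    (u v : A) : e.symm (add u v) = e.symm u + e.symm v := by
  apply e.injective
  rw [hadd, e.apply_symm_apply, e.apply_symm_apply, e.apply_symm_apply]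

lemma ell_nsmul (e : Gds p hp ≃ A)
    (hM : M.accepts = {w | ∃ x y : A, w = conv ![(x : List Γ), (y : List Γ), (add x y : List Γ)]})
    (hadd : ∀ x y : Gds p hp, e (x + y) = add (e x) (e y))
    (m : ℕ) (x : Gds p hp) :
    ell e (m • x) ≤ max (ell e x) (ell e 0) + 2 * Fintype.card σ * (Nat.log 2 m + 1) := by
  induction m using Nat.strong_induction_on with
  | _ m IH =>
    set C := Fintype.card σ
    rcases Nat.lt_or_ge m 2 with hm | hm
    · interval_cases m
      · simp only [zero_smul]
        omega
      · simp only [one_smul]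
        omega
    · have hb : m / 2 < m := by omega
      have IH2 := IH (m / 2) hb
      have hlog : Nat.log 2 (m / 2) + 1 = Nat.log 2 m := by
        rw [Nat.log_div_base]
        have : 0 < Nat.log 2 m := Nat.log_pos (by norm_num) hm
        omega
      have hmul : 2 * C * (Nat.log 2 m + 1) = 2 * C * (Nat.log 2 (m/2) + 1) + 2 * C := by
        rw [← hlog]; ring
      have hdouble : ell e ((m / 2) • x + (m / 2) • x) ≤
          max (ell e x) (ell e 0) + 2 * C * (Nat.log 2 (m / 2) + 1) + C := by
        have := ell_add e hM hadd ((m / 2) • x) ((m / 2) • x)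
        omega
      rcases Nat.even_or_odd m with he | ho
      · have hme : m = m / 2 + m / 2 := by
          obtain ⟨t, ht⟩ := he; omega
        calc ell e (m • x) = ell e ((m/2) • x + (m/2) • x) := by
              rw [← add_nsmul, ← hme]
          _ ≤ _ := hdouble
          _ ≤ _ := by omega
      · have hme : m = (m / 2 + m / 2) + 1 := by
          obtain ⟨t, ht⟩ := ho; omega
        have hstep : ell e (((m/2) • x + (m/2) • x) + x) ≤
            max (ell e ((m/2) • x + (m/2) • x)) (ell e x) + C :=
          ell_add e hM hadd _ _
        calc ell e (m • x) = ell e (((m/2) • x + (m/2) • x) + x) := by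
              rw [← add_nsmul, ← succ_nsmul, ← hme]
          _ ≤ _ := hstep
          _ ≤ _ := by omega

lemma ell_sum (e : Gds p hp ≃ A)
    (hM : M.accepts = {w | ∃ x y : A, w = conv ![(x : List Γ), (y : List Γ), (add x y : List Γ)]})
    (hadd : ∀ x y : Gds p hp, e (x + y) = add (e x) (e y))
    (d : ℕ) (f : Fin d → Gds p hp) :
    ell e (∑ i, f i) ≤ max (ell e 0) (Finset.univ.sup fun i => ell e (f i))
      + Fintype.card σ * d := by
  induction d with
  | zero => simp
  | succ d IH =>
    rw [Fin.sum_univ_succ]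
    have h1 := ell_add e hM hadd (f 0) (∑ i : Fin d, f i.succ)
    have h2 := IH (fun i => f i.succ)
    have h3 : (Finset.univ.sup fun i : Fin d => ell e (f i.succ)) ≤
        Finset.univ.sup fun i : Fin (d+1) => ell e (f i) := by
      apply Finset.sup_le
      intro i _
      exact Finset.le_sup (f := fun i : Fin (d+1) => ell e (f i)) (Finset.mem_univ i.succ)
    have h4 : ell e (f 0) ≤ Finset.univ.sup fun i : Fin (d+1) => ell e (f i) :=
      Finset.le_sup (f := fun i : Fin (d+1) => ell e (f i)) (Finset.mem_univ 0)
    have h5 : Fintype.card σ * (d+1) = Fintype.card σ * d + Fintype.card σ := by ring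
    omega

lemma ell_root (e : Gds p hp ≃ A)
    (hM : M.accepts = {w | ∃ x y : A, w = conv ![(x : List Γ), (y : List Γ), (add x y : List Γ)]})
    (hadd : ∀ x y : Gds p hp, e (x + y) = add (e x) (e y))
    (hpr : p.Prime) (g : Gds p hp) :
    ∃ h : Gds p hp, p • h = g ∧
      ell e h ≤ ell e g + ((2 * Fintype.card σ) ^ (p - 1) + 1) := by
  set K := (2 * Fintype.card σ) ^ (p - 1) + 1 with hK
  set q := p - 1 with hqdef
  have hq : 1 ≤ q := by
    have := hpr.two_le
    omega
  have hqp : q + 1 = p := by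
    have := hpr.two_le
    omega
  obtain ⟨h0, hh0⟩ := ds_div p hp g
  have main : ∀ m : ℕ, ∀ h : Gds p hp, p • h = g → ell e h = m →
      ∃ h' : Gds p hp, p • h' = g ∧ ell e h' ≤ ell e g + K := by
    intro m
    induction m using Nat.strong_induction_on with
    | _ m IH =>
      intro h hph hlh
      rcases le_or_gt (ell e h) (ell e g + K) with hle | hgt
      · exact ⟨h, hph, hle⟩
      · set a : ℕ → A := fun j => e ((j + 1) • h) with ha
        have hrel : ∀ j, j < q → add (a 0) (a j) = a (j + 1) := by
          intro j hj
          have : a 0 = e (1 • h) := rfl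
          rw [this, ha]
          simp only []
          rw [← hadd]
          congr 1
          rw [← add_nsmul]
          congr 1
          omega
        have ha0 : (a 0 : List Γ).length = ell e h := by
          show ((e (1 • h) : List Γ)).length = _
          rw [one_smul]
          rfl
        have haq : (a q : List Γ).length = ell e g := by
          show ((e ((q + 1) • h) : List Γ)).length = _
          rw [hqp, hph]
          rfl
        have hlong : (a q : List Γ).length + ((2 * Fintype.card σ) ^ q + 1)
            ≤ (a 0 : List Γ).length := by
          rw [ha0, haq]
          omega
        obtain ⟨b, hbrel, hbq, hblen⟩ := cutchain hM q hq a hrel hlong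
        have hind : ∀ j, j ≤ q → e.symm (b j) = (j + 1) • e.symm (b 0) := by
          intro j
          induction j with
          | zero => intro _; simp
          | succ j IHj =>
            intro hj
            rw [← hbrel j (by omega), esymm_add e hadd, IHj (by omega), ← succ_nsmul']
        have hfin : p • e.symm (b 0) = g := by
          have h1 := hind q le_rfl
          rw [hbq] at h1
          have h2 : e.symm (a q) = g := by
            show e.symm (e ((q + 1) • h)) = g
            rw [e.symm_apply_apply, hqp, hph]
          rw [h2] at h1
          have h3 : (q + 1) • e.symm (b 0) = g := h1.symm
          rw [hqp] at h3
          exact h3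
        have hlb : ell e (e.symm (b 0)) < m := by
          unfold ell
          rw [e.apply_symm_apply]
          rw [ha0] at hblen
          omega
        exact IH _ hlb (e.symm (b 0)) hfin rfl
  exact main (ell e h0) h0 hh0 rfl

lemma ell_rootk (e : Gds p hp ≃ A)
    (hM : M.accepts = {w | ∃ x y : A, w = conv ![(x : List Γ), (y : List Γ), (add x y : List Γ)]})
    (hadd : ∀ x y : Gds p hp, e (x + y) = add (e x) (e y))
    (hpr : p.Prime) (g : Gds p hp) (k : ℕ) :
    ∃ h : Gds p hp, p ^ k • h = g ∧
      ell e h ≤ ell e g + k * ((2 * Fintype.card σ) ^ (p - 1) + 1) := by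
  induction k with
  | zero => exact ⟨g, by simp, by simp⟩
  | succ k IH =>
    obtain ⟨h, h1, h2⟩ := IH
    obtain ⟨h', h3, h4⟩ := ell_root e hM hadd hpr h
    refine ⟨h', ?_, ?_⟩
    · rw [pow_succ, mul_smul, h3, h1]
    · calc ell e h' ≤ ell e h + ((2 * Fintype.card σ) ^ (p - 1) + 1) := h4
        _ ≤ ell e g + k * ((2 * Fintype.card σ) ^ (p - 1) + 1)
            + ((2 * Fintype.card σ) ^ (p - 1) + 1) := by omega
        _ = ell e g + (k+1) * ((2 * Fintype.card σ) ^ (p - 1) + 1) := by ring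

end Main

lemma count_words {Γ : Type} [Fintype Γ] {β : Type} [Fintype β] (f : β → List Γ)
    (hinj : Function.Injective f) (L : ℕ) (hlen : ∀ x, (f x).length ≤ L) :
    Fintype.card β ≤ (Fintype.card Γ + 1) ^ (L + 1) := by
  classical
  have h : Function.Injective (fun x : β => (fun i : Fin (L+1) => (f x)[(i:ℕ)]?)) := by
    intro x y hxy
    apply hinj
    apply List.ext_getElem?
    intro n
    rcases lt_or_ge n (L+1) with hn | hn
    · exact congrFun hxy ⟨n, hn⟩
    · rw [List.getElem?_eq_none (le_trans (hlen x) (by omega)),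
        List.getElem?_eq_none (le_trans (hlen y) (by omega))]
  calc Fintype.card β ≤ Fintype.card (Fin (L+1) → Option Γ) :=
        Fintype.card_le_of_injective _ h
    _ = (Fintype.card Γ + 1) ^ (L + 1) := by
        rw [Fintype.card_fun, Fintype.card_option, Fintype.card_fin]

lemma binom (a k : ℕ) : (k + a) * a ^ k ≤ (a + 1) ^ (k + 1) := by
  induction k with
  | zero => simpa using Nat.le_succ a
  | succ k IH =>
    have h1 : (a+1)^(k+1+1) = (a+1)^(k+1) * (a+1) := by ring
    have h2 : (k + a) * a ^ k * (a + 1) ≤ (a+1)^(k+1) * (a+1) :=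
      Nat.mul_le_mul_right _ IH
    have h3 : (k + 1 + a) * a ^ (k+1) ≤ (k + a) * a ^ k * (a + 1) := by
      have he : (k + a) * a ^ k * (a + 1) = (k+a) * a^(k+1) + (k+a)*a^k := by ring
      rw [he]
      have h4 : a^(k+1) ≤ (k+a) * a^k := by
        calc a^(k+1) = a * a^k := by ring
          _ ≤ (k+a) * a^k := Nat.mul_le_mul_right _ (by omega)
      calc (k+1+a) * a^(k+1) = (k+a) * a^(k+1) + a^(k+1) := by ring
        _ ≤ (k+a)*a^(k+1) + (k+a)*a^k := by omega
    calc (k+1+a) * a^(k+1) ≤ (k + a) * a ^ k * (a + 1) := h3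
      _ ≤ (a+1)^(k+1) * (a+1) := h2
      _ = (a+1)^(k+1+1) := h1.symm

/-- The direct sum of countably infinitely many copies of the Prüfer group
`ℤ_{p^∞}` has no automatic presentation. -/
theorem directSum_Prufer_not_automatic (p : ℕ) (hp : p.Prime) :
    ¬ ∃ (Γ : Type) (_ : Fintype Γ) (A : Set (List Γ)) (add : A → A → A)
        (e : DirectSum ℕ (fun _ => Prufer p hp) ≃ A),
        Language.IsRegular (A : Language Γ) ∧
        Language.IsRegular
          {w | ∃ x y : A, w = conv ![(x : List Γ), (y : List Γ), (add x y : List Γ)]} ∧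
        ∀ x y : DirectSum ℕ (fun _ => Prufer p hp),
          e (x + y) = add (e x) (e y) := by
  rintro ⟨Γ, hΓ, A, add, e, -, hR, hadd⟩
  obtain ⟨σ, hσ, M, hM⟩ := hR
  classical
  set C := Fintype.card σ with hC
  set K := (2 * C) ^ (p - 1) + 1 with hK
  set P := Nat.log 2 p + 1 with hP
  set ε := Fintype.card Γ + 1 with hε
  set z0 := ell (A := A) e (0 : Gds p hp) with hz0
  -- main counting estimate
  have count : ∀ d k : ℕ,
      p ^ (k * d) ≤ ε ^ ((max (Finset.univ.sup fun i : Fin d => ell e (eDS p hp (i:ℕ))) z0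
        + C * d + 2 * C) + k * (K + 2 * C * P) + 1) := by
    intro d k
    set N0 := max (Finset.univ.sup fun i : Fin d => ell e (eDS p hp (i:ℕ))) z0 with hN0
    have hroots : ∀ i : Fin d, ∃ h : Gds p hp,
        p ^ k • h = eDS p hp (i:ℕ) ∧ ell e h ≤ ell e (eDS p hp (i:ℕ)) + k * K :=
      fun i => ell_rootk e hM hadd hp _ k
    choose h hroot hhlen using hroots
    set Φ : (Fin d → Fin (p ^ k)) → Gds p hp := fun c => ∑ i, (c i : ℕ) • h i with hΦ
    have hΦinj : Function.Injective Φ := by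
      intro c c' hcc
      set aZ : Fin d → ℤ := fun i => ((c i : ℕ) : ℤ) - ((c' i : ℕ) : ℤ) with haZ
      have hsum : ∑ i, aZ i • h i = 0 := by
        have : ∑ i, aZ i • h i = Φ c - Φ c' := by
          rw [hΦ]
          simp only [haZ, sub_smul, natCast_zsmul]
          rw [Finset.sum_sub_distrib]
        rw [this, hcc, sub_self]
      have hdvd := indep p hp d k h hroot aZ hsum
      funext i
      have hZ : aZ i = ((c i : ℕ) : ℤ) - ((c' i : ℕ) : ℤ) := rfl
      have h1 : aZ i = 0 := by
        refine Int.eq_zero_of_abs_lt_dvd (hdvd i) ?_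
        have hci : (c i : ℕ) < p ^ k := (c i).2
        have hci' : (c' i : ℕ) < p ^ k := (c' i).2
        have hciZ : ((c i : ℕ) : ℤ) < ((p ^ k : ℕ) : ℤ) := by exact_mod_cast hci
        have hci'Z : ((c' i : ℕ) : ℤ) < ((p ^ k : ℕ) : ℤ) := by exact_mod_cast hci'
        have hcast : ((p:ℤ))^k = ((p^k : ℕ) : ℤ) := by push_cast; ring
        rw [hZ, hcast, abs_lt]
        constructor <;> omega
      rw [hZ] at h1
      have : ((c i : ℕ) : ℤ) = ((c' i : ℕ) : ℤ) := by omega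
      have : (c i : ℕ) = (c' i : ℕ) := by exact_mod_cast this
      exact Fin.ext this
    have hΦlen : ∀ c, ell e (Φ c) ≤ N0 + C * d + 2 * C + k * (K + 2 * C * P) := by
      intro c
      simp only [hΦ]
      have hsum := ell_sum e hM hadd d (fun i => (c i : ℕ) • h i)
      rw [← hC, ← hz0] at hsum
      have hterm : ∀ i : Fin d, ell e ((c i : ℕ) • h i) ≤ N0 + k * K + 2 * C * (k * P + 1) := by
        intro i
        have h1 := ell_nsmul e hM hadd (c i : ℕ) (h i)
        rw [← hC, ← hz0] at h1
        have hlog : Nat.log 2 (c i : ℕ) ≤ k * P := by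
          rcases Nat.eq_zero_or_pos (c i : ℕ) with h0 | h0
          · rw [h0, Nat.log_zero_right]; omega
          · have hlt : (c i : ℕ) < 2 ^ (k * P) := by
              have hp2 : p < 2 ^ P := Nat.lt_pow_succ_log_self (by norm_num) p
              calc (c i : ℕ) < p ^ k := (c i).2
                _ ≤ (2 ^ P) ^ k := Nat.pow_le_pow_left hp2.le k
                _ = 2 ^ (k * P) := by rw [← pow_mul, mul_comm]
            exact (Nat.log_lt_of_lt_pow (by omega) hlt).le
        have h2 : ell e (h i) ≤ N0 + k * K := by
          have h3 : ell e (eDS p hp (i:ℕ)) ≤ N0 := by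
            refine le_trans ?_ (le_max_left _ _)
            exact Finset.le_sup (f := fun i : Fin d => ell e (eDS p hp (i:ℕ)))
              (Finset.mem_univ i)
          have := hhlen i
          omega
        have h4 : 2 * C * (Nat.log 2 (c i : ℕ) + 1) ≤ 2 * C * (k * P + 1) :=
          Nat.mul_le_mul_left _ (by omega)
        have h5 : max (ell e (h i)) z0 ≤ N0 + k * K := by
          have : z0 ≤ N0 := le_max_right _ _
          omega
        omega
      have hsup : (Finset.univ.sup fun i : Fin d => ell e ((c i : ℕ) • h i))
          ≤ N0 + k * K + 2 * C * (k * P + 1) := by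
        apply Finset.sup_le
        intro i _
        exact hterm i
      have hz0N : z0 ≤ N0 := le_max_right _ _
      calc ell e (∑ i, (c i : ℕ) • h i)
          ≤ max z0 (Finset.univ.sup fun i => ell e ((c i : ℕ) • h i)) + C * d := hsum
        _ ≤ (N0 + k * K + 2 * C * (k * P + 1)) + C * d := by
            have hm : max z0 (Finset.univ.sup fun i => ell e ((c i : ℕ) • h i))
                ≤ N0 + k * K + 2 * C * (k * P + 1) := max_le (by omega) hsup
            omega
        _ = N0 + C * d + 2 * C + k * (K + 2 * C * P) := by ring
    have hwinj : Function.Injective (fun c : Fin d → Fin (p ^ k) => ((e (Φ c) : List Γ))) := by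
      intro c c' hcc
      apply hΦinj
      apply e.injective
      exact Subtype.ext hcc
    have hcount := count_words _ hwinj (N0 + C * d + 2 * C + k * (K + 2 * C * P))
      (fun c => hΦlen c)
    rw [Fintype.card_fun, Fintype.card_fin, Fintype.card_fin, ← pow_mul] at hcount
    rw [← hε] at hcount
    exact hcount
  -- numeric contradiction
  have hε1 : 1 ≤ ε := by omega
  set Qc := K + 2 * C * P with hQc
  set a := ε ^ Qc with haa
  have ha1 : 1 ≤ a := Nat.one_le_pow _ _ (by omega)
  set d := a with hd
  set N0d := max (Finset.univ.sup fun i : Fin d => ell e (eDS p hp (i:ℕ))) z0 with hN0d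
  set E := ε ^ (N0d + C * d + 2 * C + 1) with hE
  have hcount : ∀ k, p ^ (k * d) ≤ E * a ^ k := by
    intro k
    calc p ^ (k * d) ≤ ε ^ ((N0d + C * d + 2 * C) + k * Qc + 1) := count d k
      _ = E * a ^ k := by
          rw [hE, haa, ← pow_mul, ← pow_add]
          congr 1
          ring
  have hpd : a + 1 ≤ p ^ d := by
    calc a + 1 = d + 1 := rfl
      _ ≤ 2 ^ d := Nat.lt_two_pow_self
      _ ≤ p ^ d := Nat.pow_le_pow_left hp.two_le d
  set k := E * a + 2 with hk
  have h1 : (a + 1) ^ k ≤ E * a ^ k := by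
    calc (a + 1) ^ k ≤ (p ^ d) ^ k := Nat.pow_le_pow_left hpd k
      _ = p ^ (k * d) := by rw [← pow_mul, mul_comm]
      _ ≤ E * a ^ k := hcount k
  have h2 : (k - 1 + a) * a ^ (k - 1) ≤ (a + 1) ^ k := by
    have := binom a (k - 1)
    have hk1 : k - 1 + 1 = k := by omega
    rwa [hk1] at this
  have h3 : E * a ^ k = (E * a) * a ^ (k - 1) := by
    have hk1 : k = (k - 1) + 1 := by omega
    calc E * a ^ k = E * a ^ ((k-1)+1) := by rw [← hk1]
      _ = (E * a) * a ^ (k - 1) := by rw [pow_succ]; ring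
  have h4 : k - 1 + a ≤ E * a := by
    apply Nat.le_of_mul_le_mul_right
    · rw [← h3]
      exact le_trans h2 h1
    · exact Nat.pow_pos (by omega)
  omega
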